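/- The Kress quadrature weights q_j = −(π/m)Σ_{k=1}^{m−1}(1/k)cos(kjπ/m) − (−1)^j π/(2m²), j = 0,…,2m−1, satisfy the exactness property Σ_{j=0}^{2m−1} q_j cos(n α_j) = ∫₀^{2π} cos(nα) ln(2|sin(α/2)|) dα = −π/n for every integer 1 ≤ n ≤ m−1, where α_j = jπ/m. -/

import Mathlib

open Real MeasureTheory Filter Set

lemma cos_sum_eq_zero (m : ℕ) (hm : 1 ≤ m) (p : ℤ) (hp : ¬ ((2 * (m:ℤ)) ∣ p)) :
    ∑ j ∈ Finset.range (2 * m), Real.cos ((p : ℝ) * j * π / m) = 0 := by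
  have hm0 : (m : ℝ) ≠ 0 := Nat.cast_ne_zero.2 (by omega)
  set θ : ℝ := (p : ℝ) * π / m with hθ
  set z : ℂ := Complex.exp ((θ : ℂ) * Complex.I) with hz
  have hz1 : z ≠ 1 := by
    intro h
    rw [hz, Complex.exp_eq_one_iff] at h
    obtain ⟨k, hk⟩ := h
    have hk' : (θ:ℂ) * Complex.I = ((2 * (k:ℝ) * π : ℝ) : ℂ) * Complex.I := by
      rw [hk]; push_cast; ring
    have hI : (θ : ℂ) = ((2 * (k:ℝ) * π : ℝ) : ℂ) :=
      mul_right_cancel₀ Complex.I_ne_zero hk'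
    have hθeq : θ = 2 * (k:ℝ) * π := by exact_mod_cast hI
    rw [hθ] at hθeq
    have hpk : (p : ℝ) = 2 * m * k := by
      field_simp at hθeq
      have hπ : (π : ℝ) ≠ 0 := Real.pi_ne_zero
      have := mul_right_cancel₀ hπ (by rw [hθeq]; ring : (p:ℝ) * π = (2 * k * m) * π)
      rw [this]; ring
    have : p = 2 * (m:ℤ) * k := by exact_mod_cast hpk
    exact hp ⟨k, this⟩
  have hz2m : z ^ (2 * m) = 1 := by
    rw [hz, ← Complex.exp_nat_mul]
    have : ((2 * m : ℕ) : ℂ) * ((θ:ℂ) * Complex.I) = (p : ℂ) * (2 * (π:ℂ) * Complex.I) := by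
      rw [hθ]
      have hmc : (m:ℂ) ≠ 0 := by exact_mod_cast hm0
      push_cast
      field_simp
    rw [this]
    exact_mod_cast Complex.exp_int_mul_two_pi_mul_I p
  have hsum : ∑ j ∈ Finset.range (2 * m), z ^ j = 0 := by
    rw [geom_sum_eq hz1, hz2m]
    simp
  have hre : ∀ j : ℕ, (z ^ j).re = Real.cos ((p : ℝ) * j * π / m) := by
    intro j
    rw [hz, ← Complex.exp_nat_mul, ← mul_assoc]
    have : ((j:ℂ)) * (θ:ℂ) = ((j * θ : ℝ) : ℂ) := by push_cast; ring
    rw [this, Complex.exp_ofReal_mul_I_re]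
    congr 1
    rw [hθ]; ring
  calc ∑ j ∈ Finset.range (2 * m), Real.cos ((p : ℝ) * j * π / m)
      = (∑ j ∈ Finset.range (2 * m), z ^ j).re := by
        rw [Complex.re_sum]; exact Finset.sum_congr rfl fun j _ => (hre j).symm
    _ = 0 := by rw [hsum]; rfl

lemma not_dvd_of_bounds {m : ℕ} (p : ℤ) (hp0 : p ≠ 0) (hpb : |p| < 2 * m) : ¬ ((2 * (m:ℤ)) ∣ p) := by
  intro h
  have h2 : (2 * (m:ℤ)) ∣ |p| := (dvd_abs _ _).2 h
  have h3 : (2 * (m:ℤ)) ≤ |p| := Int.le_of_dvd (abs_pos.2 hp0) h2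
  omega

lemma sum_cos_mul_cos (m : ℕ) (hm : 2 ≤ m) (k n : ℕ) (hk1 : 1 ≤ k) (hk2 : k ≤ m)
    (hn1 : 1 ≤ n) (hn2 : n ≤ m - 1) :
    ∑ j ∈ Finset.range (2 * m), Real.cos (k * j * π / m) * Real.cos (n * j * π / m)
      = if k = n then (m : ℝ) else 0 := by
  have hm0 : (m : ℝ) ≠ 0 := Nat.cast_ne_zero.2 (by omega)
  have hnm : n < m := by omega
  have hterm : ∀ j : ℕ, Real.cos ((k:ℝ) * j * π / m) * Real.cos ((n:ℝ) * j * π / m)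
      = (Real.cos ((((k:ℤ) - n : ℤ) : ℝ) * j * π / m)
          + Real.cos ((((k:ℤ) + n : ℤ) : ℝ) * j * π / m)) / 2 := by
    intro j
    have h := Real.two_mul_cos_mul_cos ((k:ℝ) * j * π / m) ((n:ℝ) * j * π / m)
    have e1 : (k:ℝ) * j * π / m - (n:ℝ) * j * π / m = (((k:ℤ) - n : ℤ) : ℝ) * j * π / m := by
      push_cast; ring
    have e2 : (k:ℝ) * j * π / m + (n:ℝ) * j * π / m = (((k:ℤ) + n : ℤ) : ℝ) * j * π / m := by
      push_cast; ring
    rw [e1, e2] at h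
    linarith
  rw [Finset.sum_congr rfl fun j _ => hterm j, ← Finset.sum_div, Finset.sum_add_distrib]
  have hsum2 : ∑ j ∈ Finset.range (2 * m), Real.cos ((((k:ℤ) + n : ℤ) : ℝ) * j * π / m) = 0 := by
    apply cos_sum_eq_zero m (by omega)
    apply not_dvd_of_bounds _ (by omega)
    have : ((k:ℤ) + n) ≤ 2 * m - 1 := by omega
    rw [abs_of_pos (by omega : (0:ℤ) < (k:ℤ) + n)]
    omega
  rw [hsum2, add_zero]
  by_cases hkn : k = n
  · subst hkn
    simp only [sub_self, Int.cast_zero, zero_mul, zero_div, Real.cos_zero]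
    rw [Finset.sum_const, Finset.card_range]
    simp only [if_true, eq_self_iff_true, nsmul_eq_mul, mul_one]
    push_cast; ring
  · have hsum1 : ∑ j ∈ Finset.range (2 * m), Real.cos ((((k:ℤ) - n : ℤ) : ℝ) * j * π / m) = 0 := by
      apply cos_sum_eq_zero m (by omega)
      have hne : (k:ℤ) - n ≠ 0 := by
        intro h
        exact hkn (by exact_mod_cast (by omega : (k:ℤ) = n))
      apply not_dvd_of_bounds _ hne
      rw [abs_sub_lt_iff]
      constructor <;> [skip; skip] <;> push_cast <;> omega
    rw [hsum1, if_neg hkn]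
    norm_num

lemma discrete_sum (m : ℕ) (hm : 2 ≤ m) (q : ℕ → ℝ)
    (hq : ∀ j : ℕ, q j =
      -(π / m) * ∑ k ∈ Finset.Icc 1 (m - 1), (1 / (k : ℝ)) * Real.cos (k * j * π / m)
        - (-1 : ℝ) ^ j * π / (2 * (m : ℝ) ^ 2))
    (n : ℕ) (hn1 : 1 ≤ n) (hn2 : n ≤ m - 1) :
    (∑ j ∈ Finset.range (2 * m), q j * Real.cos (n * ((j : ℝ) * π / m))) = -π / n := by
  have hm0 : (m : ℝ) ≠ 0 := Nat.cast_ne_zero.2 (by omega)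
  have hn0 : (n : ℝ) ≠ 0 := Nat.cast_ne_zero.2 (by omega)
  have hkey : ∀ j : ℕ, q j * Real.cos (n * ((j : ℝ) * π / m))
      = ∑ k ∈ Finset.Icc 1 (m - 1),
          (-(π / m) * (1 / (k : ℝ))) * (Real.cos (k * j * π / m) * Real.cos (n * j * π / m))
        - (π / (2 * (m : ℝ) ^ 2)) * (Real.cos ((m:ℝ) * j * π / m) * Real.cos (n * j * π / m)) := by
    intro j
    have hc : Real.cos ((m:ℝ) * j * π / m) = (-1 : ℝ) ^ j := by
      have : (m:ℝ) * j * π / m = (j : ℝ) * π := by field_simp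
      rw [this]
      have := Real.cos_add_nat_mul_pi 0 j
      simpa using this
    have harg : (n : ℝ) * ((j : ℝ) * π / m) = (n : ℝ) * j * π / m := by ring
    rw [hq j, hc, harg]
    have hR : ∑ k ∈ Finset.Icc 1 (m - 1),
        (-(π / m) * (1 / (k : ℝ))) * (Real.cos (k * j * π / m) * Real.cos (n * j * π / m))
        = (∑ k ∈ Finset.Icc 1 (m - 1), (1 / (k : ℝ)) * Real.cos (k * j * π / m))
            * (-(π / m) * Real.cos (n * j * π / m)) := by
      rw [Finset.sum_mul]
      exact Finset.sum_congr rfl fun k _ => by ring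
    rw [hR]; ring
  rw [Finset.sum_congr rfl fun j _ => hkey j, Finset.sum_sub_distrib, ← Finset.mul_sum]
  rw [Finset.sum_comm]
  have hinner : ∀ k ∈ Finset.Icc 1 (m-1),
      (∑ j ∈ Finset.range (2 * m),
        (-(π / m) * (1 / (k : ℝ))) * (Real.cos (k * j * π / m) * Real.cos (n * j * π / m)))
      = (-(π / m) * (1 / (k : ℝ))) * (if k = n then (m:ℝ) else 0) := by
    intro k hk
    rw [Finset.mem_Icc] at hk
    rw [← Finset.mul_sum, sum_cos_mul_cos m hm k n hk.1 (by omega) hn1 hn2]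
  rw [Finset.sum_congr rfl hinner]
  rw [sum_cos_mul_cos m hm m n (by omega) le_rfl hn1 hn2]
  rw [if_neg (by omega : ¬ m = n)]
  simp only [mul_ite, mul_zero]
  rw [Finset.sum_ite_eq' (Finset.Icc 1 (m-1)) n (fun k => -(π / m) * (1 / (k : ℝ)) * (m:ℝ))]
  rw [if_pos (Finset.mem_Icc.2 ⟨hn1, hn2⟩)]
  field_simp
  ring

lemma kress_trig_identity (n : ℕ) (hn : 1 ≤ n) (α : ℝ) :
    Real.sin (n * α) * Real.cos (α / 2)
      = Real.sin (α / 2) * (1 + 2 * ∑ k ∈ Finset.Icc 1 (n - 1), Real.cos (k * α)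
          + Real.cos (n * α)) := by
  induction n, hn using Nat.le_induction with
  | base =>
    simp only [Nat.cast_one, one_mul, Nat.sub_self, Finset.Icc_self, Finset.Icc_eq_empty_of_lt,
      show (1:ℕ) - 1 = 0 from rfl]
    rw [show Finset.Icc 1 0 = ∅ from rfl, Finset.sum_empty]
    have h1 : Real.sin α = 2 * Real.sin (α/2) * Real.cos (α/2) := by
      rw [show α = 2 * (α/2) by ring, Real.sin_two_mul]
      ring_nf
    have h2 : Real.cos α = 2 * Real.cos (α/2)^2 - 1 := by
      rw [show α = 2 * (α/2) by ring, Real.cos_two_mul]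
      ring_nf
    rw [h1, h2]; ring
  | succ n hn IH =>
    obtain ⟨k, rfl⟩ : ∃ k, n = k + 1 := ⟨n - 1, by omega⟩
    have hsum : ∑ j ∈ Finset.Icc 1 (k + 1 + 1 - 1), Real.cos (j * α)
        = (∑ j ∈ Finset.Icc 1 (k + 1 - 1), Real.cos (j * α)) + Real.cos ((k+1) * α) := by
      rw [show k + 1 + 1 - 1 = (k) + 1 from rfl]
      rw [Finset.sum_Icc_succ_top (by omega : 1 ≤ k + 1)]
      simp
    rw [hsum]
    have hss : Real.sin (((k:ℝ)+2) * α) - Real.sin (((k:ℝ)+1) * α)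
        = 2 * Real.sin (α/2) * Real.cos (((((k:ℝ)+2)*α) + (((k:ℝ)+1)*α))/2) := by
      rw [Real.sin_sub_sin]
      ring_nf
    have hcc : Real.cos (((k:ℝ)+2) * α) + Real.cos (((k:ℝ)+1) * α)
        = 2 * Real.cos (((((k:ℝ)+2)*α) + (((k:ℝ)+1)*α))/2) * Real.cos (α/2) := by
      rw [Real.cos_add_cos]
      ring_nf
    push_cast
    push_cast at IH
    have hcomm : ∀ x : ℕ, Real.cos ((x:ℝ) * α) = Real.cos (α * x) := fun x => by rw [mul_comm]
    simp only [hcomm] at IH ⊢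
    linear_combination (norm := ring_nf) IH + Real.cos (α/2) * hss - Real.sin (α/2) * hcc

lemma intervalIntegrable_log01 : IntervalIntegrable Real.log volume 0 1 := by
  have h : IntegrableOn (fun x : ℝ => -Real.log x) (Ioc (0:ℝ) 1) volume := by
    apply intervalIntegral.integrableOn_deriv_of_nonneg (g := fun x => x - x * Real.log x)
    · exact (continuous_id.sub Real.continuous_mul_log).continuousOn
    · intro x hx
      have h1 : HasDerivAt (fun x : ℝ => x - x * Real.log x) (1 - (Real.log x + 1)) x :=
        (hasDerivAt_id x).sub (Real.hasDerivAt_mul_log (ne_of_gt hx.1))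
      convert h1 using 1
      ring
    · intro x hx
      have : Real.log x ≤ 0 := Real.log_nonpos hx.1.le hx.2.le
      linarith
  rw [intervalIntegrable_iff_integrableOn_Ioc_of_le (by norm_num)]
  have h2 := h.neg
  rw [show (-fun x : ℝ => -Real.log x) = Real.log by funext x; simp] at h2
  exact h2

lemma intervalIntegrable_log_to (c : ℝ) (hc : 1 ≤ c) : IntervalIntegrable Real.log volume 0 c := by
  refine intervalIntegrable_log01.trans ?_
  apply ContinuousOn.intervalIntegrable
  apply Real.continuousOn_log.mono
  intro x hx
  rw [Set.uIcc_of_le hc] at hx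
  exact ne_of_gt (lt_of_lt_of_le one_pos hx.1)

lemma sin_half_lower (α : ℝ) (h1 : 0 < α) (h2 : α < 2 * π) :
    α * (2 * π - α) / (2 * π ^ 2) ≤ Real.sin (α / 2) := by
  have hπ := Real.pi_pos
  rcases le_or_gt α π with hle | hgt
  · have hj : 2 / π * |α / 2| ≤ |Real.sin (α / 2)| :=
      Real.mul_abs_le_abs_sin (by rw [abs_of_pos (by linarith)]; linarith)
    rw [abs_of_pos (by linarith), abs_of_pos
      (Real.sin_pos_of_pos_of_lt_pi (by linarith) (by linarith))] at hj
    have : α * (2 * π - α) / (2 * π ^ 2) ≤ α / π := by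
      rw [div_le_div_iff₀ (by positivity) (by positivity)]
      nlinarith [mul_nonneg (mul_nonneg h1.le h1.le) hπ.le]
    calc α * (2 * π - α) / (2 * π ^ 2) ≤ α / π := this
      _ = 2 / π * (α / 2) := by ring
      _ ≤ Real.sin (α / 2) := hj
  · have hs : Real.sin (α / 2) = Real.sin (π - α / 2) := (Real.sin_pi_sub _).symm
    have hj : 2 / π * |π - α / 2| ≤ |Real.sin (π - α / 2)| :=
      Real.mul_abs_le_abs_sin (by rw [abs_of_pos (by linarith)]; linarith)
    rw [abs_of_pos (by linarith), abs_of_pos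
      (Real.sin_pos_of_pos_of_lt_pi (by linarith) (by linarith))] at hj
    have he : 2 / π * (π - α / 2) = (2 * π - α) / π := by field_simp
    have : α * (2 * π - α) / (2 * π ^ 2) ≤ (2 * π - α) / π := by
      rw [div_le_div_iff₀ (by positivity) (by positivity)]
      nlinarith [mul_nonneg (mul_nonneg (by linarith : (0:ℝ) ≤ 2 * π - α) (by linarith : (0:ℝ) ≤ 2 * π - α)) hπ.le]
    rw [he] at hj
    linarith [hs ▸ hj]

lemma kress_kernel_integrable :
    IntervalIntegrable (fun α : ℝ => Real.log (2 * Real.sin (α / 2))) volume 0 (2 * π) := by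
  have hπ := Real.pi_pos
  have h2π1 : (1:ℝ) ≤ 2 * π := by linarith [Real.pi_gt_three]
  have hlog : IntervalIntegrable Real.log volume 0 (2 * π) := intervalIntegrable_log_to _ h2π1
  have href : IntervalIntegrable (fun α : ℝ => Real.log (2 * π - α)) volume 0 (2 * π) := by
    have := hlog.comp_sub_left (2 * π)
    simpa using this.symm
  set g : ℝ → ℝ := fun α => Real.log 2 + 2 * Real.log π - Real.log α - Real.log (2 * π - α)
    with hgdef
  have hg : IntervalIntegrable g volume 0 (2 * π) :=
    ((intervalIntegrable_const.sub hlog).sub href)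
  rw [intervalIntegrable_iff_integrableOn_Ioc_of_le (by positivity)] at hg ⊢
  have hmeas : AEStronglyMeasurable (fun α : ℝ => Real.log (2 * Real.sin (α / 2)))
      (volume.restrict (Ioc (0:ℝ) (2 * π))) := by
    apply Measurable.aestronglyMeasurable
    exact Real.measurable_log.comp (by fun_prop)
  apply hg.mono' hmeas
  rw [ae_restrict_iff' measurableSet_Ioc]
  apply ae_of_all
  intro α hα
  rcases eq_or_lt_of_le hα.2 with heq | hlt
  · subst heq
    have : Real.sin (2 * π / 2) = 0 := by
      rw [show 2 * π / 2 = π by ring, Real.sin_pi]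
    simp only [this, mul_zero, Real.log_zero, norm_zero, hgdef]
    rw [sub_self, Real.log_zero, sub_zero, Real.log_mul (by norm_num) (ne_of_gt hπ)]
    have : (0:ℝ) ≤ Real.log π := Real.log_nonneg (by linarith [Real.pi_gt_three])
    linarith
  · have h0 : 0 < α := hα.1
    have hs : 0 < Real.sin (α / 2) :=
      Real.sin_pos_of_pos_of_lt_pi (by linarith) (by linarith)
    have hs1 : Real.sin (α / 2) ≤ 1 := Real.sin_le_one _
    have hlow := sin_half_lower α h0 hlt
    have hprod : 0 < α * (2 * π - α) := by nlinarith
    have hlogsum : Real.log α + Real.log (2 * π - α) ≤ 2 * Real.log π := by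
      rw [← Real.log_mul (ne_of_gt h0) (by nlinarith)]
      calc Real.log (α * (2 * π - α)) ≤ Real.log (π ^ 2) := by
            apply Real.log_le_log hprod
            nlinarith [sq_nonneg (π - α)]
        _ = 2 * Real.log π := by
            rw [Real.log_pow]; norm_num
    have hlog2 : (0:ℝ) ≤ Real.log 2 := Real.log_nonneg (by norm_num)
    rw [Real.norm_eq_abs, abs_le]
    constructor
    · have hlb : Real.log (α * (2 * π - α) / π ^ 2) ≤ Real.log (2 * Real.sin (α / 2)) := by
        apply Real.log_le_log (by positivity)
        calc α * (2 * π - α) / π ^ 2 = 2 * (α * (2 * π - α) / (2 * π ^ 2)) := by ring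
          _ ≤ 2 * Real.sin (α / 2) := by linarith
      have he : Real.log (α * (2 * π - α) / π ^ 2)
          = Real.log α + Real.log (2 * π - α) - 2 * Real.log π := by
        rw [Real.log_div (ne_of_gt hprod) (by positivity),
          Real.log_mul (ne_of_gt h0) (by nlinarith), Real.log_pow]
        norm_num
      rw [he] at hlb
      simp only [hgdef]
      linarith
    · have hub : Real.log (2 * Real.sin (α / 2)) ≤ Real.log 2 :=
        Real.log_le_log (by positivity) (by linarith)
      simp only [hgdef]
      linarith

lemma kress_integrand_integrable (n : ℕ) :
    IntervalIntegrable (fun α : ℝ => Real.cos (n * α) * Real.log (2 * Real.sin (α / 2)))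
      volume 0 (2 * π) :=
  kress_kernel_integrable.continuousOn_mul (Continuous.continuousOn (by fun_prop))

-- bound: |sin(nα)| ≤ 2nπ sin(α/2) on (0, 2π)
lemma sin_n_bound (n : ℕ) (α : ℝ) (h1 : 0 < α) (h2 : α < 2 * π) :
    |Real.sin (n * α)| ≤ 2 * n * π * Real.sin (α / 2) := by
  have hπ := Real.pi_pos
  have hlow := sin_half_lower α h1 h2
  rcases le_or_gt α π with hle | hgt
  · have h3 : |Real.sin ((n:ℝ) * α)| ≤ (n:ℝ) * α := by
      calc |Real.sin ((n:ℝ) * α)| ≤ |(n:ℝ) * α| := Real.abs_sin_le_abs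
        _ = (n:ℝ) * α := abs_of_nonneg (by positivity)
    have h4 : α / (2 * π) ≤ Real.sin (α / 2) := by
      have : α / (2 * π) ≤ α * (2 * π - α) / (2 * π ^ 2) := by
        rw [div_le_div_iff₀ (by positivity) (by positivity)]
        nlinarith [mul_nonneg (mul_nonneg h1.le hπ.le) (sub_nonneg.2 hle)]
      linarith
    calc |Real.sin ((n:ℝ) * α)| ≤ (n:ℝ) * α := h3
      _ = 2 * n * π * (α / (2 * π)) := by field_simp
      _ ≤ 2 * n * π * Real.sin (α / 2) := by
        rcases Nat.eq_zero_or_pos n with rfl | hn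
        · simp
        · apply mul_le_mul_of_nonneg_left h4 (by positivity)
  · have h3 : |Real.sin ((n:ℝ) * α)| ≤ (n:ℝ) * (2 * π - α) := by
      have : Real.sin ((n:ℝ) * α) = Real.sin ((n:ℝ) * α - (n:ℕ) * (2 * π)) :=
        (Real.sin_sub_nat_mul_two_pi _ n).symm
      rw [this]
      calc |Real.sin ((n:ℝ) * α - (n:ℝ) * (2 * π))| ≤ |(n:ℝ) * α - (n:ℝ) * (2 * π)| :=
            Real.abs_sin_le_abs
        _ = (n:ℝ) * (2 * π - α) := by
            rw [abs_of_nonpos (by nlinarith)]; ring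
    have h4 : (2 * π - α) / (2 * π) ≤ Real.sin (α / 2) := by
      have : (2 * π - α) / (2 * π) ≤ α * (2 * π - α) / (2 * π ^ 2) := by
        rw [div_le_div_iff₀ (by positivity) (by positivity)]
        nlinarith [mul_nonneg (mul_nonneg (by linarith : (0:ℝ) ≤ 2 * π - α) hπ.le)
          (by linarith : (0:ℝ) ≤ α - π)]
      linarith
    calc |Real.sin ((n:ℝ) * α)| ≤ (n:ℝ) * (2 * π - α) := h3
      _ = 2 * n * π * ((2 * π - α) / (2 * π)) := by field_simp
      _ ≤ 2 * n * π * Real.sin (α / 2) := by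
        rcases Nat.eq_zero_or_pos n with rfl | hn
        · simp
        · apply mul_le_mul_of_nonneg_left h4 (by positivity)

-- limit of the log-product term at both endpoints
lemma kress_tendsto_zero (n : ℕ) :
    Tendsto (fun α : ℝ => Real.sin (n * α) * Real.log (2 * Real.sin (α / 2)))
      (nhdsWithin 0 (Ioi 0)) (nhds 0)
    ∧ Tendsto (fun α : ℝ => Real.sin (n * α) * Real.log (2 * Real.sin (α / 2)))
      (nhdsWithin (2 * π) (Iio (2 * π))) (nhds 0) := by
  have hπ := Real.pi_pos
  set G : ℝ → ℝ := fun α => 2 * n * π *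
    |(2 * Real.sin (α / 2)) * Real.log (2 * Real.sin (α / 2)) / 2| with hGdef
  have hGcont : Continuous G := by
    apply continuous_const.mul
    apply Continuous.abs
    apply Continuous.div_const
    exact Real.continuous_mul_log.comp (by fun_prop)
  have hG0 : G 0 = 0 := by simp [hGdef]
  have hG2π : G (2 * π) = 0 := by
    have : Real.sin (2 * π / 2) = 0 := by rw [show 2 * π / 2 = π by ring, Real.sin_pi]
    simp [hGdef, this]
  have hbound : ∀ α ∈ Ioo (0:ℝ) (2 * π),
      |Real.sin (n * α) * Real.log (2 * Real.sin (α / 2))| ≤ G α := by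
    intro α hα
    have hs : 0 < Real.sin (α / 2) :=
      Real.sin_pos_of_pos_of_lt_pi (by linarith [hα.1]) (by linarith [hα.2])
    have hb := sin_n_bound n α hα.1 hα.2
    rw [abs_mul, hGdef]
    calc |Real.sin ((n:ℝ) * α)| * |Real.log (2 * Real.sin (α / 2))|
        ≤ (2 * n * π * Real.sin (α / 2)) * |Real.log (2 * Real.sin (α / 2))| :=
          mul_le_mul_of_nonneg_right hb (abs_nonneg _)
      _ = 2 * n * π * |(2 * Real.sin (α / 2)) * Real.log (2 * Real.sin (α / 2)) / 2| := by
          rw [abs_div, abs_mul]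
          rw [abs_of_pos (by positivity : (0:ℝ) < 2 * Real.sin (α/2)),
            abs_of_pos (by norm_num : (0:ℝ) < 2)]
          ring
  constructor
  · have hGt : Tendsto G (nhdsWithin 0 (Ioi 0)) (nhds 0) := by
      have h := (hGcont.tendsto 0).mono_left
        (nhdsWithin_le_nhds : nhdsWithin (0:ℝ) (Ioi 0) ≤ nhds 0)
      rwa [hG0] at h
    have hmem : Ioo (0:ℝ) (2 * π) ∈ nhdsWithin (0:ℝ) (Ioi 0) :=
      Ioo_mem_nhdsGT_of_mem ⟨le_refl 0, by positivity⟩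
    have hGtneg : Tendsto (fun α => -G α) (nhdsWithin 0 (Ioi 0)) (nhds 0) := by
      simpa using hGt.neg
    refine tendsto_of_tendsto_of_tendsto_of_le_of_le' hGtneg hGt ?_ ?_
    · filter_upwards [hmem] with α hα
      have := hbound α hα
      rw [abs_le] at this
      linarith [this.1]
    · filter_upwards [hmem] with α hα
      have := hbound α hα
      rw [abs_le] at this
      linarith [this.2]
  · have hGt : Tendsto G (nhdsWithin (2 * π) (Iio (2 * π))) (nhds 0) := by
      have h := (hGcont.tendsto (2 * π)).mono_left
        (nhdsWithin_le_nhds : nhdsWithin (2*π) (Iio (2*π)) ≤ nhds (2*π))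
      rwa [hG2π] at h
    have hmem : Ioo (0:ℝ) (2 * π) ∈ nhdsWithin (2 * π) (Iio (2 * π)) :=
      Ioo_mem_nhdsLT_of_mem ⟨by positivity, le_refl (2 * π)⟩
    have hGtneg : Tendsto (fun α => -G α) (nhdsWithin (2 * π) (Iio (2 * π))) (nhds 0) := by
      simpa using hGt.neg
    refine tendsto_of_tendsto_of_tendsto_of_le_of_le' hGtneg hGt ?_ ?_
    · filter_upwards [hmem] with α hα
      have := hbound α hα
      rw [abs_le] at this
      linarith [this.1]
    · filter_upwards [hmem] with α hα
      have := hbound α hα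
      rw [abs_le] at this
      linarith [this.2]

noncomputable def kressF (n : ℕ) : ℝ → ℝ := fun α =>
  Real.sin (n * α) * Real.log (2 * Real.sin (α / 2)) / n
    - (α / 2 + (∑ k ∈ Finset.Icc 1 (n - 1), Real.sin (k * α) / k)
        + Real.sin (n * α) / (2 * n)) / n

lemma kressF_hasDerivAt (n : ℕ) (hn : 1 ≤ n) (α : ℝ) (hα : α ∈ Ioo (0:ℝ) (2 * π)) :
    HasDerivAt (kressF n) (Real.cos (n * α) * Real.log (2 * Real.sin (α / 2))) α := by
  have hπ := Real.pi_pos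
  have hn0 : (n:ℝ) ≠ 0 := Nat.cast_ne_zero.2 (by omega)
  have hs : 0 < Real.sin (α / 2) :=
    Real.sin_pos_of_pos_of_lt_pi (by linarith [hα.1]) (by linarith [hα.2])
  have hhalf : HasDerivAt (fun α : ℝ => α / 2) (1 / 2) α := by
    simpa using (hasDerivAt_id α).div_const 2
  have hsin2 : HasDerivAt (fun α : ℝ => Real.sin (α / 2)) (Real.cos (α / 2) * (1 / 2)) α :=
    (Real.hasDerivAt_sin _).comp α hhalf
  have hmul2 : HasDerivAt (fun α : ℝ => 2 * Real.sin (α / 2))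
      (2 * (Real.cos (α / 2) * (1 / 2))) α := hsin2.const_mul 2
  have hlog : HasDerivAt (fun α : ℝ => Real.log (2 * Real.sin (α / 2)))
      ((2 * (Real.cos (α / 2) * (1 / 2))) / (2 * Real.sin (α / 2))) α :=
    hmul2.log (by positivity)
  have hlin : ∀ c : ℝ, HasDerivAt (fun α : ℝ => c * α) (c * 1) α :=
    fun c => (hasDerivAt_id α).const_mul c
  have hsinn : HasDerivAt (fun α : ℝ => Real.sin ((n:ℝ) * α))
      (Real.cos ((n:ℝ) * α) * ((n:ℝ) * 1)) α :=
    (Real.hasDerivAt_sin _).comp α (hlin (n:ℝ))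
  have hsum : HasDerivAt (fun α : ℝ => ∑ k ∈ Finset.Icc 1 (n - 1), Real.sin ((k:ℝ) * α) / k)
      (∑ k ∈ Finset.Icc 1 (n - 1), Real.cos ((k:ℝ) * α) * ((k:ℝ) * 1) / k) α := by
    apply HasDerivAt.fun_sum
    intro k hk
    exact ((Real.hasDerivAt_sin _).comp α (hlin (k:ℝ))).div_const k
  have hFd := ((hsinn.mul hlog).div_const (n:ℝ)).sub
    (((hhalf.add hsum).add (hsinn.div_const (2 * (n:ℝ)))).div_const (n:ℝ))
  have hsum_simp : ∑ k ∈ Finset.Icc 1 (n - 1), Real.cos ((k:ℝ) * α) * ((k:ℝ) * 1) / k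
      = ∑ k ∈ Finset.Icc 1 (n - 1), Real.cos ((k:ℝ) * α) := by
    apply Finset.sum_congr rfl
    intro k hk
    have hk0 : (k:ℝ) ≠ 0 := Nat.cast_ne_zero.2 (by
      have := (Finset.mem_Icc.1 hk).1; omega)
    field_simp
  rw [hsum_simp] at hFd
  refine hFd.congr_deriv (Eq.symm ?_)
  have hid := kress_trig_identity n hn α
  have hkey : Real.sin ((n:ℝ) * α) * ((2 * (Real.cos (α / 2) * (1 / 2))) / (2 * Real.sin (α / 2)))
      = (1 + 2 * ∑ k ∈ Finset.Icc 1 (n - 1), Real.cos ((k:ℝ) * α) + Real.cos ((n:ℝ) * α)) / 2 := by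
    rw [show (2 * (Real.cos (α / 2) * (1 / 2))) = Real.cos (α / 2) by ring]
    rw [mul_div_assoc', hid]
    rw [show (2 * Real.sin (α / 2)) = Real.sin (α / 2) * 2 by ring]
    rw [mul_div_mul_left _ _ (ne_of_gt hs)]
  rw [hkey]
  field_simp
  ring






lemma kress_integral (n : ℕ) (hn : 1 ≤ n) :
    (∫ α in (0:ℝ)..(2 * π), Real.cos (n * α) * Real.log (2 * Real.sin (α / 2))) = -π / n := by
  have hπ := Real.pi_pos
  have hn0 : (n:ℝ) ≠ 0 := Nat.cast_ne_zero.2 (by omega)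
  set C : ℝ → ℝ := fun α => α / 2 + (∑ k ∈ Finset.Icc 1 (n - 1), Real.sin (k * α) / k)
      + Real.sin (n * α) / (2 * n) with hCdef
  have hCcont : Continuous C := by
    apply Continuous.add
    apply Continuous.add
    · exact continuous_id.div_const 2
    · exact continuous_finset_sum _ fun k _ =>
        (Real.continuous_sin.comp (continuous_const.mul continuous_id)).div_const _
    · exact (Real.continuous_sin.comp (continuous_const.mul continuous_id)).div_const _
  have hzero : ∀ k : ℕ, Real.sin ((k:ℝ) * (2 * π)) = 0 := fun k => by
    rw [show ((k:ℝ) * (2 * π)) = ((2 * k : ℕ) : ℝ) * π by push_cast; ring,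
      Real.sin_nat_mul_pi]
  have hC0 : C 0 = 0 := by simp [hCdef]
  have hC2π : C (2 * π) = π := by
    have hsum0 : (∑ k ∈ Finset.Icc 1 (n - 1), Real.sin ((k:ℝ) * (2 * π)) / k) = 0 :=
      Finset.sum_eq_zero fun k _ => by rw [hzero k, zero_div]
    show (2 * π) / 2 + (∑ k ∈ Finset.Icc 1 (n - 1), Real.sin ((k:ℝ) * (2 * π)) / k)
        + Real.sin ((n:ℝ) * (2 * π)) / (2 * n) = π
    rw [hsum0, hzero n, zero_div, add_zero, add_zero]
    ring
  have hFa : Tendsto (kressF n) (nhdsWithin 0 (Ioi 0)) (nhds 0) := by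
    have h1 := ((kress_tendsto_zero n).1.div_const (n:ℝ)).sub
      (((hCcont.tendsto 0).mono_left
        (nhdsWithin_le_nhds : nhdsWithin (0:ℝ) (Ioi 0) ≤ nhds 0)).div_const (n:ℝ))
    rw [hC0] at h1
    unfold kressF
    simpa [hCdef] using h1
  have hFb : Tendsto (kressF n) (nhdsWithin (2 * π) (Iio (2 * π))) (nhds (-π / n)) := by
    have h1 := ((kress_tendsto_zero n).2.div_const (n:ℝ)).sub
      (((hCcont.tendsto (2 * π)).mono_left
        (nhdsWithin_le_nhds : nhdsWithin (2*π) (Iio (2*π)) ≤ nhds (2*π))).div_const (n:ℝ))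
    rw [hC2π] at h1
    have : (0:ℝ) / n - π / n = -π / n := by ring
    rw [this] at h1
    exact h1
  have := intervalIntegral.integral_eq_sub_of_hasDerivAt_of_tendsto
    (by positivity : (0:ℝ) < 2 * π) (fun α hα => kressF_hasDerivAt n hn α hα)
    (kress_integrand_integrable n) hFa hFb
  rw [this]
  ring

/-- Exactness of the Kress quadrature: the weights q_j integrate cos(nα) against the
logarithmic kernel exactly for 1 ≤ n ≤ m−1, the common value being −π/n. -/
theorem kress_quadrature_exactness
    (m : ℕ) (hm : 2 ≤ m) (q : ℕ → ℝ)
    (hq : ∀ j : ℕ, q j =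
      -(π / m) * ∑ k ∈ Finset.Icc 1 (m - 1), (1 / (k : ℝ)) * Real.cos (k * j * π / m)
        - (-1 : ℝ) ^ j * π / (2 * (m : ℝ) ^ 2)) :
    ∀ n : ℕ, 1 ≤ n → n ≤ m - 1 →
      (∑ j ∈ Finset.range (2 * m), q j * Real.cos (n * ((j : ℝ) * π / m)))
        = ∫ α in (0 : ℝ)..(2 * π), Real.cos (n * α) * Real.log (2 * |Real.sin (α / 2)|) ∧
      (∫ α in (0 : ℝ)..(2 * π), Real.cos (n * α) * Real.log (2 * |Real.sin (α / 2)|))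
        = -π / n := by
  intro n hn1 hn2
  have hπ := Real.pi_pos
  have hint := kress_integral n hn1
  have hcongr : (∫ α in (0:ℝ)..(2 * π), Real.cos (n * α) * Real.log (2 * |Real.sin (α / 2)|))
      = ∫ α in (0:ℝ)..(2 * π), Real.cos (n * α) * Real.log (2 * Real.sin (α / 2)) := by
    apply intervalIntegral.integral_congr
    intro α hα
    rw [Set.uIcc_of_le (by positivity)] at hα
    have habs : |Real.sin (α / 2)| = Real.sin (α / 2) :=
      abs_of_nonneg (Real.sin_nonneg_of_nonneg_of_le_pi (by linarith [hα.1])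
        (by linarith [hα.2]))
    simp only []
    rw [habs]
  constructor
  · rw [discrete_sum m hm q hq n hn1 hn2, hcongr, hint]
  · rw [hcongr, hint]
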